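/- Let F be a field, K a field extension of F (not necessarily finite over F), and A a nontrivial finite-dimensional associative unital F-algebra. Then A is a central simple F-algebra if and only if K ⊗_F A is a central simple K-algebra. -/

import Mathlib

open scoped TensorProduct

namespace CSABaseChangeAux

variable {F K A : Type*} [Field F] [Field K] [Algebra F K] [Ring A] [Algebra F A]
variable {ι : Type*} [DecidableEq ι] (ℬ : Module.Basis ι F K)

noncomputable def e : K ⊗[F] A ≃ₗ[F] ι →₀ A := TensorProduct.equivFinsuppOfBasisLeft ℬ

lemma e_tmul (k : K) (a : A) (i : ι) : e ℬ (k ⊗ₜ[F] a) i = ℬ.repr k i • a :=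
  TensorProduct.equivFinsuppOfBasisLeft_apply_tmul_apply ℬ k a i

lemma e_mul_left (b : A) (x : K ⊗[F] A) (i : ι) :
    e ℬ ((1 ⊗ₜ[F] b) * x) i = b * e ℬ x i := by
  induction x using TensorProduct.induction_on with
  | zero => simp [e]
  | tmul k a =>
    simp [e, Algebra.TensorProduct.tmul_mul_tmul,
      TensorProduct.equivFinsuppOfBasisLeft_apply_tmul_apply, mul_smul_comm]
  | add x y hx hy => simp only [mul_add, map_add, Finsupp.add_apply, hx, hy]

lemma e_mul_right (b : A) (x : K ⊗[F] A) (i : ι) :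
    e ℬ (x * (1 ⊗ₜ[F] b)) i = e ℬ x i * b := by
  induction x using TensorProduct.induction_on with
  | zero => simp [e]
  | tmul k a =>
    simp [e, Algebra.TensorProduct.tmul_mul_tmul,
      TensorProduct.equivFinsuppOfBasisLeft_apply_tmul_apply, smul_mul_assoc]
  | add x y hx hy => simp only [add_mul, map_add, Finsupp.add_apply, hx, hy]

lemma e_repr (x : K ⊗[F] A) : ((e ℬ x).sum fun i a => ℬ i ⊗ₜ[F] a) = x := by
  conv_rhs => rw [← (e ℬ).symm_apply_apply x]
  rw [e, TensorProduct.equivFinsuppOfBasisLeft_symm_apply]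

lemma exists_tmul_one [Nontrivial A] (x : K ⊗[F] A)
    (h : ∀ i, e ℬ x i ∈ (⊥ : Subalgebra F A)) :
    ∃ k : K, x = k ⊗ₜ[F] 1 ∧ ∀ i, algebraMap F A (ℬ.repr k i) = e ℬ x i := by
  have h' : ∀ i, ∃ f : F, algebraMap F A f = e ℬ x i := fun i => Algebra.mem_bot.1 (h i)
  set g : ι → F := fun i => (h' i).choose with hg
  have hgspec : ∀ i, algebraMap F A (g i) = e ℬ x i := fun i => (h' i).choose_spec
  have hg0 : ∀ i, g i ≠ 0 → i ∈ (e ℬ x).support := by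
    intro i hi
    rw [Finsupp.mem_support_iff]
    intro h0
    exact hi ((algebraMap F A).injective (by rw [hgspec i, h0, map_zero]))
  set c : ι →₀ F := Finsupp.onFinset _ g hg0 with hc
  refine ⟨ℬ.repr.symm c, ?_, ?_⟩
  · apply (e ℬ).injective
    ext i
    rw [e_tmul, ℬ.repr.apply_symm_apply]
    show _ = g i • (1 : A)
    rw [← Algebra.algebraMap_eq_smul_one]
    exact (hgspec i).symm
  · intro i
    rw [ℬ.repr.apply_symm_apply]
    exact hgspec i

omit [DecidableEq ι] in
lemma exists_repr_one_ne_zero : ∃ i : ι, ℬ.repr 1 i ≠ 0 := by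
  by_contra h
  push_neg at h
  have : ℬ.repr 1 = 0 := Finsupp.ext h
  rw [LinearEquiv.map_eq_zero_iff] at this
  exact one_ne_zero this

include ℬ in
lemma nontrivial_tensor [Nontrivial A] : Nontrivial (K ⊗[F] A) := by
  refine ⟨1, 0, fun h01 => ?_⟩
  obtain ⟨i, hi⟩ := exists_repr_one_ne_zero ℬ
  have := congrArg (fun y => e ℬ y i) h01
  rw [Algebra.TensorProduct.one_def] at this
  simp only [e_tmul, map_zero, Finsupp.coe_zero, Pi.zero_apply] at this
  exact one_ne_zero ((smul_eq_zero.1 this).resolve_left hi)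

lemma comp_mem_of_mul_left (I : TwoSidedIdeal A) (x y : K ⊗[F] A)
    (hy : ∀ j, e ℬ y j ∈ I) (i : ι) : e ℬ (x * y) i ∈ I := by
  induction x using TensorProduct.induction_on with
  | zero => rw [zero_mul, map_zero]; exact I.zero_mem
  | add x₁ x₂ h₁ h₂ =>
    rw [add_mul, map_add]
    exact I.add_mem h₁ h₂
  | tmul k a =>
    rw [← e_repr ℬ y, Finsupp.sum, Finset.mul_sum, map_sum, Finsupp.finset_sum_apply]
    refine I.finsetSum_mem _ _ fun j _ => ?_
    rw [Algebra.TensorProduct.tmul_mul_tmul, e_tmul, Algebra.smul_def]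
    exact I.mul_mem_left _ _ (I.mul_mem_left _ _ (hy j))

lemma comp_mem_of_mul_right (I : TwoSidedIdeal A) (x y : K ⊗[F] A)
    (hy : ∀ j, e ℬ y j ∈ I) (i : ι) : e ℬ (y * x) i ∈ I := by
  induction x using TensorProduct.induction_on with
  | zero => rw [mul_zero, map_zero]; exact I.zero_mem
  | add x₁ x₂ h₁ h₂ =>
    rw [mul_add, map_add]
    exact I.add_mem h₁ h₂
  | tmul k a =>
    rw [← e_repr ℬ y, Finsupp.sum, Finset.sum_mul, map_sum, Finsupp.finset_sum_apply]
    refine I.finsetSum_mem _ _ fun j _ => ?_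
    rw [Algebra.TensorProduct.tmul_mul_tmul, e_tmul, Algebra.smul_def]
    exact I.mul_mem_left _ _ (I.mul_mem_right _ _ (hy j))

end CSABaseChangeAux

open CSABaseChangeAux in
/-- Let `K` be a field extension of `F` and `A` a nontrivial finite-dimensional
`F`-algebra.  Then `A` is central simple over `F` if and only if `K ⊗[F] A` is
central simple over `K`. -/
theorem central_simple_iff_baseChange_central_simple
    (F K A : Type*) [Field F] [Field K] [Algebra F K]
    [Ring A] [Algebra F A] [FiniteDimensional F A] [Nontrivial A] :
    (Algebra.IsCentral F A ∧ IsSimpleRing A) ↔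
      (Algebra.IsCentral K (K ⊗[F] A) ∧ IsSimpleRing (K ⊗[F] A)) := by
  classical
  set ℬ : Module.Basis (Module.Basis.ofVectorSpaceIndex F K) F K := Module.Basis.ofVectorSpace F K with hℬ
  constructor
  · rintro ⟨hc, hs⟩
    haveI := nontrivial_tensor (A := A) ℬ
    constructor
    · -- K ⊗ A is central over K
      refine ⟨fun z hz => ?_⟩
      have hcent : ∀ i, e ℬ z i ∈ Subalgebra.center F A := by
        intro i
        rw [Subalgebra.mem_center_iff]
        intro b
        have h := Subalgebra.mem_center_iff.1 hz ((1 : K) ⊗ₜ[F] b)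
        have := congrArg (fun w => e ℬ w i) h
        simpa only [e_mul_left, e_mul_right] using this
      obtain ⟨k, rfl, -⟩ := exists_tmul_one ℬ z (fun i => hc.out (hcent i))
      exact Algebra.mem_bot.2 ⟨k, by simp [Algebra.TensorProduct.algebraMap_apply]⟩
    · -- K ⊗ A is simple
      refine IsSimpleRing.of_eq_bot_or_eq_top fun J => ?_
      rw [or_iff_not_imp_left, ← J.one_mem_iff]
      intro hJ
      obtain ⟨x, hxJ, hx0⟩ : ∃ x, x ∈ J ∧ x ≠ 0 := by
        by_contra h
        push_neg at h
        exact hJ (eq_bot_iff.2 fun x hx => (TwoSidedIdeal.mem_bot _).2 (h x hx))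
      have hP : ∃ n, ∃ y, y ∈ J ∧ y ≠ 0 ∧ ((e ℬ) y).support.card = n :=
        ⟨_, x, hxJ, hx0, rfl⟩
      obtain ⟨y, hyJ, hy0, hycard⟩ := Nat.find_spec hP
      have hey : e ℬ y ≠ 0 := fun h => hy0 ((e ℬ).map_eq_zero_iff.1 h)
      obtain ⟨i₀, hi₀⟩ := Finsupp.support_nonempty_iff.2 hey
      -- the two-sided ideal of "i₀-components"
      obtain ⟨I₀, hI₀⟩ : ∃ I₀ : TwoSidedIdeal A, ∀ a, a ∈ I₀ ↔
          ∃ w, w ∈ J ∧ ((e ℬ) w).support ⊆ ((e ℬ) y).support ∧ (e ℬ) w i₀ = a := by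
        refine ⟨TwoSidedIdeal.mk' _ ?_ ?_ ?_ ?_ ?_,
          fun a => TwoSidedIdeal.mem_mk' _ _ _ _ _ _ a⟩
        · exact ⟨0, J.zero_mem, by simp, by simp⟩
        · rintro a b ⟨w₁, h₁, hs₁, he₁⟩ ⟨w₂, h₂, hs₂, he₂⟩
          refine ⟨w₁ + w₂, J.add_mem h₁ h₂, ?_, by rw [map_add, Finsupp.add_apply, he₁, he₂]⟩
          rw [map_add]
          exact Finsupp.support_add.trans (Finset.union_subset hs₁ hs₂)
        · rintro a ⟨w, h₁, hs₁, he₁⟩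
          refine ⟨-w, J.neg_mem h₁, ?_, by rw [map_neg, Finsupp.neg_apply, he₁]⟩
          rw [map_neg, Finsupp.support_neg]
          exact hs₁
        · rintro b a ⟨w, h₁, hs₁, he₁⟩
          refine ⟨(1 ⊗ₜ[F] b) * w, J.mul_mem_left _ _ h₁, ?_, by rw [e_mul_left, he₁]⟩
          intro i hi
          apply hs₁
          rw [Finsupp.mem_support_iff] at hi ⊢
          intro h0
          exact hi (by rw [e_mul_left, h0, mul_zero])
        · rintro a b ⟨w, h₁, hs₁, he₁⟩
          refine ⟨w * (1 ⊗ₜ[F] b), J.mul_mem_right _ _ h₁, ?_, by rw [e_mul_right, he₁]⟩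
          intro i hi
          apply hs₁
          rw [Finsupp.mem_support_iff] at hi ⊢
          intro h0
          exact hi (by rw [e_mul_right, h0, zero_mul])
      -- e ℬ y i₀ is a nonzero element of I₀, so 1 ∈ I₀
      have h1I₀ : (1 : A) ∈ I₀ :=
        IsSimpleRing.one_mem_of_ne_zero_mem I₀ (Finsupp.mem_support_iff.1 hi₀)
          ((hI₀ _).2 ⟨y, hyJ, le_refl _, rfl⟩)
      obtain ⟨w, hwJ, hwsupp, hw1⟩ := (hI₀ 1).1 h1I₀
      have hw0 : w ≠ 0 := by
        intro h
        rw [h, map_zero] at hw1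
        simp only [Finsupp.coe_zero, Pi.zero_apply] at hw1
        exact one_ne_zero hw1.symm
      -- support of w has exactly the minimal cardinality, so supports coincide
      have hwcard : ((e ℬ) w).support.card = Nat.find hP := by
        refine le_antisymm (hycard ▸ Finset.card_le_card hwsupp) ?_
        by_contra h
        push_neg at h
        exact Nat.find_min hP h ⟨w, hwJ, hw0, rfl⟩
      have hsupp_eq : ((e ℬ) w).support = ((e ℬ) y).support :=
        Finset.eq_of_subset_of_card_le hwsupp (by rw [hwcard, hycard])
      have hi₀w : i₀ ∈ ((e ℬ) w).support := hsupp_eq ▸ hi₀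
      -- every component of w is central
      have hcentw : ∀ i, e ℬ w i ∈ Subalgebra.center F A := by
        intro i
        rw [Subalgebra.mem_center_iff]
        intro b
        set z := (1 ⊗ₜ[F] b) * w - w * (1 ⊗ₜ[F] b) with hz
        have hzJ : z ∈ J := J.sub_mem (J.mul_mem_left _ _ hwJ) (J.mul_mem_right _ _ hwJ)
        have hzcomp : ∀ j, e ℬ z j = b * e ℬ w j - e ℬ w j * b := by
          intro j
          rw [hz, map_sub, Finsupp.sub_apply, e_mul_left, e_mul_right]
        have hzsupp : ((e ℬ) z).support ⊆ ((e ℬ) w).support.erase i₀ := by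
          intro j hj
          rw [Finsupp.mem_support_iff] at hj
          rw [Finset.mem_erase, Finsupp.mem_support_iff]
          constructor
          · intro h
            subst h
            exact hj (by rw [hzcomp, hw1, mul_one, one_mul, sub_self])
          · intro h0
            exact hj (by rw [hzcomp, h0, mul_zero, zero_mul, sub_self])
        have hzcard : ((e ℬ) z).support.card < Nat.find hP := by
          calc ((e ℬ) z).support.card ≤ (((e ℬ) w).support.erase i₀).card :=
                Finset.card_le_card hzsupp
            _ < ((e ℬ) w).support.card := Finset.card_erase_lt_of_mem hi₀w
            _ = Nat.find hP := hwcard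
        have hz0 : z = 0 := by
          by_contra h
          exact Nat.find_min hP hzcard ⟨z, hzJ, h, rfl⟩
        have := hzcomp i
        rw [hz0, map_zero, Finsupp.coe_zero, Pi.zero_apply] at this
        exact sub_eq_zero.1 this.symm
      obtain ⟨k, rfl, hk⟩ := exists_tmul_one ℬ w (fun i => hc.out (hcentw i))
      have hki₀ : ℬ.repr k i₀ = 1 := by
        apply (algebraMap F A).injective
        rw [map_one, hk i₀, hw1]
      have hkne : k ≠ 0 := by
        intro h
        rw [h, map_zero, Finsupp.coe_zero, Pi.zero_apply] at hki₀
        exact zero_ne_one hki₀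
      have : (k⁻¹ ⊗ₜ[F] (1 : A)) * (k ⊗ₜ[F] (1 : A)) = 1 := by
        rw [Algebra.TensorProduct.tmul_mul_tmul, inv_mul_cancel₀ hkne, mul_one,
          Algebra.TensorProduct.one_def]
      exact this ▸ J.mul_mem_left _ _ hwJ
  · rintro ⟨hc, hs⟩
    constructor
    · -- A is central over F
      refine ⟨fun z hz => ?_⟩
      have h1z : (1 : K) ⊗ₜ[F] z ∈ Subalgebra.center K (K ⊗[F] A) := by
        rw [Subalgebra.mem_center_iff]
        intro w
        induction w using TensorProduct.induction_on with
        | zero => rw [zero_mul, mul_zero]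
        | add a b ha hb => rw [add_mul, mul_add, ha, hb]
        | tmul k a =>
          rw [Algebra.TensorProduct.tmul_mul_tmul, Algebra.TensorProduct.tmul_mul_tmul,
            mul_one, one_mul, Subalgebra.mem_center_iff.1 hz a]
      obtain ⟨k, hk⟩ := Algebra.mem_bot.1 (hc.out h1z)
      have hk' : k ⊗ₜ[F] (1 : A) = (1 : K) ⊗ₜ[F] z := by
        rw [← hk, Algebra.TensorProduct.algebraMap_apply, Algebra.algebraMap_self, RingHom.id_apply]
      obtain ⟨i, hi⟩ := exists_repr_one_ne_zero ℬ
      have hcomp := congrArg (fun w => e ℬ w i) hk'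
      simp only [e_tmul] at hcomp
      rw [Algebra.mem_bot]
      refine ⟨(ℬ.repr 1 i)⁻¹ * ℬ.repr k i, ?_⟩
      rw [Algebra.algebraMap_eq_smul_one, mul_smul, hcomp, smul_smul,
        inv_mul_cancel₀ hi, one_smul]
    · -- A is simple
      refine IsSimpleRing.of_eq_bot_or_eq_top fun I => ?_
      rw [or_iff_not_imp_left, ← I.one_mem_iff]
      intro hI
      obtain ⟨a, haI, ha0⟩ : ∃ a, a ∈ I ∧ a ≠ 0 := by
        by_contra h
        push_neg at h
        exact hI (eq_bot_iff.2 fun x hx => (TwoSidedIdeal.mem_bot _).2 (h x hx))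
      obtain ⟨C, hC⟩ : ∃ C : TwoSidedIdeal (K ⊗[F] A), ∀ x, x ∈ C ↔ ∀ i, e ℬ x i ∈ I := by
        refine ⟨TwoSidedIdeal.mk' {x | ∀ i, e ℬ x i ∈ I} ?_ ?_ ?_ ?_ ?_,
          fun x => TwoSidedIdeal.mem_mk' _ _ _ _ _ _ x⟩
        · intro i; rw [map_zero]; exact I.zero_mem
        · intro x y hx hy i
          rw [map_add, Finsupp.add_apply]
          exact I.add_mem (hx i) (hy i)
        · intro x hx i
          rw [map_neg, Finsupp.neg_apply]
          exact I.neg_mem (hx i)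
        · intro x y hy i
          exact comp_mem_of_mul_left ℬ I x y hy i
        · intro x y hx i
          exact comp_mem_of_mul_right ℬ I y x hx i
      have h1a : (1 : K) ⊗ₜ[F] a ∈ C := by
        rw [hC]
        intro i
        rw [e_tmul, Algebra.smul_def]
        exact I.mul_mem_left _ _ haI
      obtain ⟨i, hi⟩ := exists_repr_one_ne_zero ℬ
      have hne : (1 : K) ⊗ₜ[F] a ≠ 0 := by
        intro h
        have := congrArg (fun w => e ℬ w i) h
        simp only [e_tmul, map_zero, Finsupp.coe_zero, Pi.zero_apply] at this
        exact ha0 ((smul_eq_zero.1 this).resolve_left hi)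
      have h1C : (1 : K ⊗[F] A) ∈ C := IsSimpleRing.one_mem_of_ne_zero_mem C hne h1a
      have := (hC 1).1 h1C i
      rw [Algebra.TensorProduct.one_def, e_tmul, Algebra.smul_def] at this
      have h1 : (1 : A) = algebraMap F A (ℬ.repr 1 i)⁻¹ *
          (algebraMap F A (ℬ.repr 1 i) * 1) := by
        rw [← mul_assoc, ← map_mul, inv_mul_cancel₀ hi, map_one, one_mul]
      rw [h1]
      exact I.mul_mem_left _ _ this
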